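/- arXiv:1905.13228 — 2 statements merged into one kernel-verified Lean document; each statement's English description precedes it below -/
import Mathlib

section
/- Let G be a finite (d_u, d_w)-regular bipartite graph with bipartition (U, W) and let {X_1, …, X_ℓ, Y} be a Godsil–McKay switching partition of its vertex set. If X_i is of Type 3.1 and X_j is of Type 3.2 (i ≠ j), then there is no edge of G between a vertex of X_i and a vertex of X_j. -/
open Finset SimpleGraph Polynomial

open scoped Classical in
/-- Number of neighbors of `v` inside the finset `S`, in the graph `G`. -/
noncomputable def nbrsIn {V : Type*} (G : SimpleGraph V) (v : V) (S : Finset V) : ℕ :=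
  (S.filter (fun w => G.Adj v w)).card

/-- The `i`-th part `X_i` of a partition of the vertex set encoded by `f`
(`f v = some i` means `v ∈ X_i`, and `f v = none` means `v ∈ Y`). -/
def Xset {V : Type*} [Fintype V] {ℓ : ℕ} (f : V → Option (Fin ℓ)) (i : Fin ℓ) : Finset V :=
  Finset.univ.filter (fun v => f v = some i)

/-- The part `Y` of the partition of the vertex set encoded by `f`. -/
def Yset {V : Type*} [Fintype V] {ℓ : ℕ} (f : V → Option (Fin ℓ)) : Finset V :=
  Finset.univ.filter (fun v => f v = none)

/-- The partition `{X_1, …, X_ℓ, Y}` (encoded by `f`) is a Godsil–McKay switching partition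
of `G`: every `y ∈ Y` has `0`, `|X_i|/2` or `|X_i|` neighbors in each `X_i`, and for all `i, j`,
all vertices of `X_i` have the same number of neighbors in `X_j`. -/
def IsGMPartition {V : Type*} [Fintype V] (G : SimpleGraph V) {ℓ : ℕ}
    (f : V → Option (Fin ℓ)) : Prop :=
  (∀ y ∈ Yset f, ∀ i : Fin ℓ,
      nbrsIn G y (Xset f i) = 0 ∨ 2 * nbrsIn G y (Xset f i) = (Xset f i).card ∨
        nbrsIn G y (Xset f i) = (Xset f i).card) ∧
  (∀ i j : Fin ℓ, ∀ u ∈ Xset f i, ∀ v ∈ Xset f i,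
      nbrsIn G u (Xset f j) = nbrsIn G v (Xset f j))

/-- The pairs of vertices whose adjacency is flipped by the Godsil–McKay switching:
one of them lies in `Y`, the other in some `X_i`, and the former has exactly `|X_i|/2`
neighbors in `X_i`. -/
def gmFlip {V : Type*} [Fintype V] (G : SimpleGraph V) {ℓ : ℕ} (f : V → Option (Fin ℓ))
    (u v : V) : Prop :=
  (∃ i : Fin ℓ, f u = none ∧ f v = some i ∧ 2 * nbrsIn G u (Xset f i) = (Xset f i).card) ∨
  (∃ i : Fin ℓ, f v = none ∧ f u = some i ∧ 2 * nbrsIn G v (Xset f i) = (Xset f i).card)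

/-- The Godsil–McKay switched graph `G'`: adjacency within `X_1 ∪ … ∪ X_ℓ`, or within `Y`,
is as in `G`; adjacency between `y ∈ Y` and `x ∈ X_i` is complemented exactly when `y` has
`|X_i|/2` neighbors in `X_i` in `G`. -/
def gmSwitch {V : Type*} [Fintype V] (G : SimpleGraph V) {ℓ : ℕ} (f : V → Option (Fin ℓ)) :
    SimpleGraph V where
  Adj u v := (gmFlip G f u v ∧ ¬ G.Adj u v ∧ u ≠ v) ∨ (¬ gmFlip G f u v ∧ G.Adj u v)
  symm := by
    constructor
    intro u v h
    have hsymm : gmFlip G f u v ↔ gmFlip G f v u := ⟨Or.symm, Or.symm⟩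
    rcases h with ⟨h1, h2, h3⟩ | ⟨h1, h2⟩
    · exact Or.inl ⟨hsymm.mp h1, fun h => h2 (G.adj_symm h), h3.symm⟩
    · exact Or.inr ⟨fun h => h1 (hsymm.mpr h), G.adj_symm h2⟩
  loopless := by
    constructor
    intro u h
    rcases h with ⟨_, _, h3⟩ | ⟨_, h2⟩
    · exact h3 rfl
    · exact G.loopless.irrefl u h2

/-- `(U, W)` is a bipartition of the vertex set of `G` witnessing that `G` is a
`(du, dw)`-regular bipartite graph: every edge joins `U` to `W`, every vertex of `U` has
degree `du`, and every vertex of `W` has degree `dw`. -/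
def IsBiRegularBipartition {V : Type*} [Fintype V] [DecidableEq V] (G : SimpleGraph V)
    (U W : Finset V) (du dw : ℕ) : Prop :=
  U ∪ W = Finset.univ ∧ U ∩ W = ∅ ∧
  (∀ u v, G.Adj u v → (u ∈ U ∧ v ∈ W) ∨ (u ∈ W ∧ v ∈ U)) ∧
  (∀ u ∈ U, nbrsIn G u Finset.univ = du) ∧
  (∀ w ∈ W, nbrsIn G w Finset.univ = dw)


open scoped Classical in
lemma nbrsIn_sum_comm {V : Type*} (G : SimpleGraph V) (A B : Finset V) :
    ∑ a ∈ A, nbrsIn G a B = ∑ b ∈ B, nbrsIn G b A := by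
  unfold nbrsIn
  simp_rw [Finset.card_filter]
  rw [Finset.sum_comm]
  apply Finset.sum_congr rfl
  intro b _
  apply Finset.sum_congr rfl
  intro a _
  simp [G.adj_comm]

/-- Property P2: in a `(du, dw)`-regular bipartite graph with a Godsil–McKay switching
partition, there is no edge between a Type-3.1 set `X_i` (meeting both `U` and `W`, with
`|X_i ∩ U| = |X_i ∩ W|`) and a Type-3.2 set `X_j` (meeting both `U` and `W`, with
`|X_j ∩ U| ≠ |X_j ∩ W|`). -/
theorem gm_no_edge_type31_type32 {V : Type*} [Fintype V] [DecidableEq V]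
    (G : SimpleGraph V) (U W : Finset V) (du dw : ℕ)
    (hG : IsBiRegularBipartition G U W du dw)
    {ℓ : ℕ} (f : V → Option (Fin ℓ)) (hf : IsGMPartition G f)
    (i j : Fin ℓ) (hij : i ≠ j)
    (h31 : (Xset f i ∩ U).Nonempty ∧ (Xset f i ∩ W).Nonempty ∧
      (Xset f i ∩ U).card = (Xset f i ∩ W).card)
    (h32 : (Xset f j ∩ U).Nonempty ∧ (Xset f j ∩ W).Nonempty ∧
      (Xset f j ∩ U).card ≠ (Xset f j ∩ W).card) :
    ∀ u ∈ Xset f i, ∀ v ∈ Xset f j, ¬ G.Adj u v := by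

  classical
  obtain ⟨hUW, hUWdisj, hbip, -, -⟩ := hG
  obtain ⟨⟨u0, hu0⟩, ⟨w0, hw0⟩, hicard⟩ := h31
  obtain ⟨⟨p0, hp0⟩, ⟨q0, hq0⟩, hjcard⟩ := h32
  set Xi := Xset f i with hXi
  set Xj := Xset f j with hXj
  have hdisj : ∀ x, x ∈ U → x ∈ W → False := by
    intro x hxU hxW
    have : x ∈ U ∩ W := Finset.mem_inter.2 ⟨hxU, hxW⟩
    rw [hUWdisj] at this
    exact absurd this (Finset.notMem_empty x)
  have keyU : ∀ u ∈ U, ∀ (S : Finset V), nbrsIn G u S = nbrsIn G u (S ∩ W) := by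
    intro u hu S
    unfold nbrsIn
    congr 1
    ext b
    simp only [Finset.mem_filter, Finset.mem_inter]
    constructor
    · rintro ⟨hb, hadj⟩
      refine ⟨⟨hb, ?_⟩, hadj⟩
      rcases hbip u b hadj with ⟨_, hbW⟩ | ⟨huW, _⟩
      · exact hbW
      · exact absurd huW (fun h => hdisj u hu h)
    · rintro ⟨⟨hb, _⟩, hadj⟩
      exact ⟨hb, hadj⟩
  have keyW : ∀ w ∈ W, ∀ (S : Finset V), nbrsIn G w S = nbrsIn G w (S ∩ U) := by
    intro w hw S
    unfold nbrsIn
    congr 1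
    ext b
    simp only [Finset.mem_filter, Finset.mem_inter]
    constructor
    · rintro ⟨hb, hadj⟩
      refine ⟨⟨hb, ?_⟩, hadj⟩
      rcases hbip w b hadj with ⟨hwU, _⟩ | ⟨_, hbU⟩
      · exact absurd hwU (fun h => hdisj w h hw)
      · exact hbU
    · rintro ⟨⟨hb, _⟩, hadj⟩
      exact ⟨hb, hadj⟩
  have hu0Xi : u0 ∈ Xi := (Finset.mem_inter.1 hu0).1
  have hu0U : u0 ∈ U := (Finset.mem_inter.1 hu0).2
  have hw0Xi : w0 ∈ Xi := (Finset.mem_inter.1 hw0).1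
  have hp0Xj : p0 ∈ Xj := (Finset.mem_inter.1 hp0).1
  set c := nbrsIn G u0 Xj with hcdef
  set c' := nbrsIn G p0 Xi with hc'def
  have hc : ∀ u ∈ Xi, nbrsIn G u Xj = c := fun u hu => hf.2 i j u hu u0 hu0Xi
  have hc' : ∀ v ∈ Xj, nbrsIn G v Xi = c' := fun v hv => hf.2 j i v hv p0 hp0Xj
  -- double counting 1
  have eq1 : (Xi ∩ U).card * c = (Xj ∩ W).card * c' := by
    have h := nbrsIn_sum_comm G (Xi ∩ U) (Xj ∩ W)
    have hL : ∑ a ∈ Xi ∩ U, nbrsIn G a (Xj ∩ W) = (Xi ∩ U).card * c := by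
      rw [Finset.sum_congr rfl (fun a ha => by
        rw [← keyU a (Finset.mem_inter.1 ha).2 Xj, hc a (Finset.mem_inter.1 ha).1])]
      simp [Finset.sum_const, mul_comm]
    have hR : ∑ b ∈ Xj ∩ W, nbrsIn G b (Xi ∩ U) = (Xj ∩ W).card * c' := by
      rw [Finset.sum_congr rfl (fun b hb => by
        rw [← keyW b (Finset.mem_inter.1 hb).2 Xi, hc' b (Finset.mem_inter.1 hb).1])]
      simp [Finset.sum_const, mul_comm]
    rw [← hL, ← hR, h]
  have eq2 : (Xi ∩ W).card * c = (Xj ∩ U).card * c' := by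
    have h := nbrsIn_sum_comm G (Xi ∩ W) (Xj ∩ U)
    have hL : ∑ a ∈ Xi ∩ W, nbrsIn G a (Xj ∩ U) = (Xi ∩ W).card * c := by
      rw [Finset.sum_congr rfl (fun a ha => by
        rw [← keyW a (Finset.mem_inter.1 ha).2 Xj, hc a (Finset.mem_inter.1 ha).1])]
      simp [Finset.sum_const, mul_comm]
    have hR : ∑ b ∈ Xj ∩ U, nbrsIn G b (Xi ∩ W) = (Xj ∩ U).card * c' := by
      rw [Finset.sum_congr rfl (fun b hb => by
        rw [← keyU b (Finset.mem_inter.1 hb).2 Xi, hc' b (Finset.mem_inter.1 hb).1])]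
      simp [Finset.sum_const, mul_comm]
    rw [← hL, ← hR, h]
  have hc'0 : c' = 0 := by
    by_contra hne
    apply hjcard
    have : (Xj ∩ W).card * c' = (Xj ∩ U).card * c' := by
      rw [← eq1, ← eq2, hicard]
    exact (Nat.eq_of_mul_eq_mul_right (Nat.pos_of_ne_zero hne) this.symm)
  have hc0 : c = 0 := by
    have hpos : 0 < (Xi ∩ U).card := Finset.card_pos.2 ⟨u0, hu0⟩
    have : (Xi ∩ U).card * c = 0 := by rw [eq1, hc'0, mul_zero]
    have := this
    rcases Nat.mul_eq_zero.1 this with h | h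
    · omega
    · exact h
  intro u hu v hv hadj
  have h1 : nbrsIn G u Xj = 0 := by rw [hc u hu, hc0]
  have : v ∈ Xj.filter (fun w => G.Adj u w) := Finset.mem_filter.2 ⟨hv, hadj⟩
  have : 0 < nbrsIn G u Xj := by
    classical
    unfold nbrsIn
    exact Finset.card_pos.2 ⟨v, by convert this⟩
  omega
end

section
/- Let G be a finite (d_u, d_w)-regular bipartite graph with bipartition (U, W) such that d_u ≠ d_w, and let {X_1, …, X_ℓ, Y} be a Godsil–McKay switching partition of its vertex set. Then no set X_i is of Type 3.2; that is, every X_i satisfies X_i ⊆ U, or X_i ⊆ W, or |X_i ∩ U| = |X_i ∩ W|. -/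
open Finset SimpleGraph Polynomial

section Helpers

open scoped Classical

variable {V : Type*} [Fintype V] [DecidableEq V]

lemma nbrsIn_eq_sum (G : SimpleGraph V) (v : V) (S : Finset V) :
    nbrsIn G v S = ∑ w ∈ S, if G.Adj v w then 1 else 0 := by
  rw [nbrsIn, Finset.card_filter]

lemma sum_nbrsIn_comm (G : SimpleGraph V) (S T : Finset V) :
    ∑ v ∈ S, nbrsIn G v T = ∑ w ∈ T, nbrsIn G w S := by
  simp only [nbrsIn_eq_sum]
  rw [Finset.sum_comm]
  exact Finset.sum_congr rfl fun w _ => Finset.sum_congr rfl fun v _ =>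
    if_congr (SimpleGraph.adj_comm G v w) rfl rfl

lemma nbrsIn_mono (G : SimpleGraph V) (v : V) {S T : Finset V} (h : S ⊆ T) :
    nbrsIn G v S ≤ nbrsIn G v T :=
  Finset.card_le_card (Finset.filter_subset_filter _ h)

lemma nbrsIn_le_card (G : SimpleGraph V) (v : V) (S : Finset V) :
    nbrsIn G v S ≤ S.card :=
  Finset.card_le_card (Finset.filter_subset _ _)

lemma nbrsIn_univ_decomp (G : SimpleGraph V) {ℓ : ℕ} (f : V → Option (Fin ℓ)) (v : V) :
    nbrsIn G v Finset.univ = nbrsIn G v (Yset f) + ∑ j : Fin ℓ, nbrsIn G v (Xset f j) := by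
  simp only [nbrsIn_eq_sum]
  rw [← Finset.sum_fiberwise Finset.univ f (fun w => if G.Adj v w then 1 else 0),
    Fintype.sum_option]
  rfl

lemma IsBiRegularBipartition.swap {G : SimpleGraph V} {U W : Finset V} {du dw : ℕ}
    (hG : IsBiRegularBipartition G U W du dw) : IsBiRegularBipartition G W U dw du := by
  obtain ⟨h1, h2, h3, h4, h5⟩ := hG
  exact ⟨by rw [Finset.union_comm]; exact h1, by rw [Finset.inter_comm]; exact h2,
    fun u v h => (h3 u v h).symm, h5, h4⟩

lemma nbrsIn_inter_right {G : SimpleGraph V} {U W : Finset V} {du dw : ℕ}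
    (hG : IsBiRegularBipartition G U W du dw) {u : V} (hu : u ∈ U) (S : Finset V) :
    nbrsIn G u S = nbrsIn G u (S ∩ W) := by
  unfold nbrsIn
  congr 1
  ext w
  simp only [Finset.mem_filter, Finset.mem_inter]
  constructor
  · rintro ⟨hw, hadj⟩
    refine ⟨⟨hw, ?_⟩, hadj⟩
    rcases hG.2.2.1 u w hadj with ⟨_, h⟩ | ⟨h, _⟩
    · exact h
    · exact absurd (Finset.mem_inter.mpr ⟨hu, h⟩)
        (by rw [hG.2.1]; exact Finset.notMem_empty u)
  · rintro ⟨⟨hw, _⟩, hadj⟩; exact ⟨hw, hadj⟩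

lemma card_inter_split {U W : Finset V} (h1 : U ∪ W = Finset.univ) (h2 : U ∩ W = ∅)
    (S : Finset V) : S.card = (S ∩ U).card + (S ∩ W).card := by
  rw [← Finset.card_union_of_disjoint, ← Finset.inter_union_distrib_left, h1,
    Finset.inter_univ]
  exact Finset.disjoint_left.mpr fun a ha hb => by
    have : a ∈ U ∩ W := Finset.mem_inter.mpr ⟨(Finset.mem_inter.mp ha).2,
      (Finset.mem_inter.mp hb).2⟩
    rw [h2] at this; exact Finset.notMem_empty a this

lemma gm_orient {G : SimpleGraph V} {U W : Finset V} {du dw : ℕ}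
    (hG : IsBiRegularBipartition G U W du dw) {ℓ : ℕ} {f : V → Option (Fin ℓ)}
    (hf : IsGMPartition G f) (i : Fin ℓ)
    (hlt : (Xset f i ∩ U).card < (Xset f i ∩ W).card) :
    ∀ u ∈ Xset f i ∩ U, nbrsIn G u (Yset f) = 0 := by
  have hsplit := card_inter_split hG.1 hG.2.1 (Xset f i)
  have step1 : ∀ y ∈ Yset f ∩ W, nbrsIn G y (Xset f i) = 0 := by
    intro y hy
    obtain ⟨hyY, hyW⟩ := Finset.mem_inter.mp hy
    have hle : nbrsIn G y (Xset f i) ≤ (Xset f i ∩ U).card := by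
      rw [nbrsIn_inter_right hG.swap hyW]
      exact nbrsIn_le_card ..
    rcases hf.1 y hyY i with h | h | h
    · exact h
    · omega
    · omega
  have step2 : ∑ u ∈ Xset f i ∩ U, nbrsIn G u (Yset f) = 0 := by
    have e1 : ∀ u ∈ Xset f i ∩ U, nbrsIn G u (Yset f) = nbrsIn G u (Yset f ∩ W) :=
      fun u hu => nbrsIn_inter_right hG (Finset.mem_inter.mp hu).2 _
    rw [Finset.sum_congr rfl e1, sum_nbrsIn_comm]
    refine Finset.sum_eq_zero fun y hy => ?_
    have h0 := step1 y hy
    have hmono : nbrsIn G y (Xset f i ∩ U) ≤ nbrsIn G y (Xset f i) :=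
      nbrsIn_mono G y Finset.inter_subset_left
    omega
  intro u hu
  exact (Finset.sum_eq_zero_iff.mp step2) u hu

lemma gm_du_lt_dw {G : SimpleGraph V} {U W : Finset V} {du dw : ℕ}
    (hG : IsBiRegularBipartition G U W du dw) (hdeg : du ≠ dw) {ℓ : ℕ}
    {f : V → Option (Fin ℓ)} (hf : IsGMPartition G f) (i : Fin ℓ)
    (hA : (Xset f i ∩ U).Nonempty)
    (hlt : (Xset f i ∩ U).card < (Xset f i ∩ W).card) : du < dw := by
  obtain ⟨u0, hu0⟩ := hA
  have hB : (Xset f i ∩ W).Nonempty := Finset.card_pos.mp (by omega)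
  obtain ⟨w0, hw0⟩ := hB
  have hY0 := gm_orient hG hf i hlt u0 hu0
  obtain ⟨hu0X, hu0U⟩ := Finset.mem_inter.mp hu0
  obtain ⟨hw0X, hw0W⟩ := Finset.mem_inter.mp hw0
  have hdu : du = ∑ j, nbrsIn G u0 (Xset f j) := by
    have h := hG.2.2.2.1 u0 hu0U
    rw [nbrsIn_univ_decomp G f u0, hY0] at h
    omega
  have hdw : dw = nbrsIn G w0 (Yset f) + ∑ j, nbrsIn G w0 (Xset f j) := by
    have h := hG.2.2.2.2 w0 hw0W
    rw [nbrsIn_univ_decomp G f w0] at h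
    omega
  have hsum : ∑ j, nbrsIn G w0 (Xset f j) = ∑ j, nbrsIn G u0 (Xset f j) :=
    Finset.sum_congr rfl fun j _ => hf.2 i j w0 hw0X u0 hu0X
  have hle : du ≤ dw := by rw [hdw, hsum, ← hdu]; exact Nat.le_add_left _ _
  exact lt_of_le_of_ne hle hdeg

lemma gm_count_cross {G : SimpleGraph V} {U W : Finset V} {du dw : ℕ}
    (hG : IsBiRegularBipartition G U W du dw) {ℓ : ℕ} {f : V → Option (Fin ℓ)}
    (hf : IsGMPartition G f) (i j : Fin ℓ) {u0 : V} (hu0 : u0 ∈ Xset f i) :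
    ∑ v ∈ Xset f j ∩ W, nbrsIn G v (Xset f i) =
      (Xset f i ∩ U).card * nbrsIn G u0 (Xset f j) := by
  have l1 : ∀ v ∈ Xset f j ∩ W, nbrsIn G v (Xset f i) = nbrsIn G v (Xset f i ∩ U) :=
    fun v hv => nbrsIn_inter_right hG.swap (Finset.mem_inter.mp hv).2 _
  rw [Finset.sum_congr rfl l1, ← sum_nbrsIn_comm]
  have l2 : ∀ u ∈ Xset f i ∩ U, nbrsIn G u (Xset f j ∩ W) = nbrsIn G u0 (Xset f j) := by
    intro u hu
    obtain ⟨huX, huU⟩ := Finset.mem_inter.mp hu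
    rw [← nbrsIn_inter_right hG huU]
    exact hf.2 i j u huX u0 hu0
  rw [Finset.sum_congr rfl l2, Finset.sum_const, smul_eq_mul]

lemma gm_core {G : SimpleGraph V} {U W : Finset V} {du dw : ℕ}
    (hG : IsBiRegularBipartition G U W du dw) (hdeg : du ≠ dw) {ℓ : ℕ}
    {f : V → Option (Fin ℓ)} (hf : IsGMPartition G f) (i : Fin ℓ)
    (hA : (Xset f i ∩ U).Nonempty)
    (hlt : (Xset f i ∩ U).card < (Xset f i ∩ W).card) : False := by
  have hdudw : du < dw := gm_du_lt_dw hG hdeg hf i hA hlt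
  obtain ⟨u0, hu0⟩ := hA
  obtain ⟨hu0X, hu0U⟩ := Finset.mem_inter.mp hu0
  have hY0 := gm_orient hG hf i hlt u0 hu0
  have hdu : du = ∑ j, nbrsIn G u0 (Xset f j) := by
    have h := hG.2.2.2.1 u0 hu0U
    rw [nbrsIn_univ_decomp G f u0, hY0] at h
    omega
  by_cases hdu0 : du = 0
  · -- w0 ∈ X i ∩ W has a neighbor in U, which would have degree du = 0.
    have hB : (Xset f i ∩ W).Nonempty := Finset.card_pos.mp (by omega)
    obtain ⟨w0, hw0⟩ := hB
    obtain ⟨hw0X, hw0W⟩ := Finset.mem_inter.mp hw0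
    have hpos : 0 < nbrsIn G w0 Finset.univ := by
      rw [hG.2.2.2.2 w0 hw0W]; omega
    obtain ⟨u', hu'⟩ := Finset.card_pos.mp hpos
    have hadj : G.Adj w0 u' := (Finset.mem_filter.mp hu').2
    have hu'U : u' ∈ U := by
      rcases hG.2.2.1 w0 u' hadj with ⟨h, _⟩ | ⟨_, h⟩
      · exact absurd (Finset.mem_inter.mpr ⟨h, hw0W⟩)
          (by rw [hG.2.1]; exact Finset.notMem_empty w0)
      · exact h
    have h0 : nbrsIn G u' Finset.univ = 0 := by rw [hG.2.2.2.1 u' hu'U]; omega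
    have : w0 ∈ Finset.univ.filter (fun x => G.Adj u' x) :=
      Finset.mem_filter.mpr ⟨Finset.mem_univ _, hadj.symm⟩
    rw [nbrsIn, Finset.card_eq_zero] at h0
    rw [h0] at this
    exact Finset.notMem_empty w0 this
  · -- there is a part j with cij > 0
    have hex : ∃ j, 0 < nbrsIn G u0 (Xset f j) := by
      by_contra hc
      push_neg at hc
      have : ∑ j, nbrsIn G u0 (Xset f j) = 0 :=
        Finset.sum_eq_zero fun j _ => Nat.le_zero.mp (hc j)
      omega
    obtain ⟨j, hj⟩ := hex
    have h1 : ∑ v ∈ Xset f j ∩ W, nbrsIn G v (Xset f i) =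
        (Xset f i ∩ U).card * nbrsIn G u0 (Xset f j) := gm_count_cross hG hf i j hu0X
    have h2 : ∑ v ∈ Xset f j ∩ U, nbrsIn G v (Xset f i) =
        (Xset f i ∩ W).card * nbrsIn G u0 (Xset f j) := gm_count_cross hG.swap hf i j hu0X
    have haipos : 0 < (Xset f i ∩ U).card := Finset.card_pos.mpr ⟨u0, hu0⟩
    have hBj : (Xset f j ∩ W).Nonempty := by
      rw [← Finset.card_pos]
      rcases Nat.eq_zero_or_pos (Xset f j ∩ W).card with h | h
      · exfalso
        rw [Finset.card_eq_zero.mp h, Finset.sum_empty] at h1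
        have := Nat.mul_pos haipos hj
        omega
      · exact h
    obtain ⟨x0, hx0⟩ := hBj
    obtain ⟨hx0X, hx0W⟩ := Finset.mem_inter.mp hx0
    have h1' : ∑ v ∈ Xset f j ∩ W, nbrsIn G v (Xset f i) =
        (Xset f j ∩ W).card * nbrsIn G x0 (Xset f i) := by
      rw [Finset.sum_congr rfl (fun v hv => hf.2 j i v (Finset.mem_inter.mp hv).1 x0 hx0X),
        Finset.sum_const, smul_eq_mul]
    have h2' : ∑ v ∈ Xset f j ∩ U, nbrsIn G v (Xset f i) =
        (Xset f j ∩ U).card * nbrsIn G x0 (Xset f i) := by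
      rw [Finset.sum_congr rfl (fun v hv => hf.2 j i v (Finset.mem_inter.mp hv).1 x0 hx0X),
        Finset.sum_const, smul_eq_mul]
    have e1 : (Xset f i ∩ U).card * nbrsIn G u0 (Xset f j) =
        (Xset f j ∩ W).card * nbrsIn G x0 (Xset f i) := h1.symm.trans h1'
    have e2 : (Xset f i ∩ W).card * nbrsIn G u0 (Xset f j) =
        (Xset f j ∩ U).card * nbrsIn G x0 (Xset f i) := h2.symm.trans h2'
    rcases Nat.lt_or_ge (Xset f j ∩ W).card (Xset f j ∩ U).card with hj2 | hj2
    · -- X_j is "bad" the other way: forces dw < du, contradiction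
      have hBjne : (Xset f j ∩ W).Nonempty := ⟨x0, hx0⟩
      have : dw < du := gm_du_lt_dw hG.swap hdeg.symm hf j hBjne hj2
      omega
    · -- (X j ∩ U).card ≤ (X j ∩ W).card : contradiction by the two counts
      have k1 : (Xset f j ∩ U).card * nbrsIn G x0 (Xset f i) ≤
          (Xset f j ∩ W).card * nbrsIn G x0 (Xset f i) :=
        Nat.mul_le_mul_right _ hj2
      have k2 : (Xset f i ∩ U).card * nbrsIn G u0 (Xset f j) <
          (Xset f i ∩ W).card * nbrsIn G u0 (Xset f j) :=
        Nat.mul_lt_mul_of_lt_of_le hlt (le_refl _) hj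
      have : (Xset f j ∩ U).card * nbrsIn G x0 (Xset f i) <
          (Xset f j ∩ U).card * nbrsIn G x0 (Xset f i) :=
        calc (Xset f j ∩ U).card * nbrsIn G x0 (Xset f i)
            ≤ (Xset f j ∩ W).card * nbrsIn G x0 (Xset f i) := k1
          _ = (Xset f i ∩ U).card * nbrsIn G u0 (Xset f j) := e1.symm
          _ < (Xset f i ∩ W).card * nbrsIn G u0 (Xset f j) := k2
          _ = (Xset f j ∩ U).card * nbrsIn G x0 (Xset f i) := e2
      exact lt_irrefl _ this

end Helpers

/-- In a `(du, dw)`-regular bipartite graph with `du ≠ dw`, a Godsil–McKay switching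
partition has no Type-3.2 set: every `X_i` satisfies `X_i ⊆ U`, or `X_i ⊆ W`, or
`|X_i ∩ U| = |X_i ∩ W|`. -/
theorem gm_no_type32_of_ne_degrees {V : Type*} [Fintype V] [DecidableEq V]
    (G : SimpleGraph V) (U W : Finset V) (du dw : ℕ)
    (hG : IsBiRegularBipartition G U W du dw) (hdeg : du ≠ dw)
    {ℓ : ℕ} (f : V → Option (Fin ℓ)) (hf : IsGMPartition G f) :
    ∀ i : Fin ℓ, Xset f i ⊆ U ∨ Xset f i ⊆ W ∨
      (Xset f i ∩ U).card = (Xset f i ∩ W).card := by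
  intro i
  by_cases hU : Xset f i ⊆ U
  · exact Or.inl hU
  by_cases hW : Xset f i ⊆ W
  · exact Or.inr (Or.inl hW)
  refine Or.inr (Or.inr ?_)
  by_contra hne
  have hmemUW : ∀ v : V, v ∉ U → v ∈ W := by
    intro v hv
    rcases Finset.mem_union.mp (by rw [hG.1]; exact Finset.mem_univ v) with h | h
    · exact absurd h hv
    · exact h
  have hmemWU : ∀ v : V, v ∉ W → v ∈ U := by
    intro v hv
    rcases Finset.mem_union.mp (by rw [hG.1]; exact Finset.mem_univ v) with h | h
    · exact h
    · exact absurd h hv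
  have hAne : (Xset f i ∩ U).Nonempty := by
    obtain ⟨v, hv, hvW⟩ := Finset.not_subset.mp hW
    exact ⟨v, Finset.mem_inter.mpr ⟨hv, hmemWU v hvW⟩⟩
  have hBne : (Xset f i ∩ W).Nonempty := by
    obtain ⟨v, hv, hvU⟩ := Finset.not_subset.mp hU
    exact ⟨v, Finset.mem_inter.mpr ⟨hv, hmemUW v hvU⟩⟩
  rcases lt_or_gt_of_ne hne with h | h
  · exact gm_core hG hdeg hf i hAne h
  · exact gm_core hG.swap hdeg.symm hf i hBne h
end
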